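/- Fix n ≥ 2, prices p, q ≥ 0, and let v_1,…,v_n be i.i.d. random variables with CDF F and density f. Define F*_p(q) := P[v_n - q < max_{i≤n-1}(v_i - p)], g_p(q,x) := (n-1)·f(x-q+p)·F(x-q+p)^{n-2}, and M := max{0, q-p}. Then F*_p(q) = ∫_M^∞ F(x)·g_p(q,x) dx, and 1 - F*_p(q) = ∫_M^∞ (1-F(x))·g_p(q,x) dx + F(M+p-q)^{n-1}. -/

import Mathlib

open MeasureTheory Set Filter
open scoped ENNReal

lemma iSup_comp_surj {ι ι' : Sort*} {e : ι → ι'} (he : Function.Surjective e) (g : ι' → ℝ) :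
    ⨆ x, g (e x) = ⨆ y, g y :=
  congrArg sSup (he.range_comp g)

lemma ciSup_sub_const {ι : Type*} [Finite ι] [Nonempty ι] (w : ι → ℝ) (p : ℝ) :
    ⨆ k, (w k - p) = (⨆ k, w k) - p := by
  have hb : BddAbove (Set.range w) := (Set.finite_range w).bddAbove
  have hb' : BddAbove (Set.range fun k => w k - p) := (Set.finite_range _).bddAbove
  apply le_antisymm
  · exact ciSup_le fun k => sub_le_sub_right (le_ciSup hb k) p
  · rw [sub_le_iff_le_add]
    exact ciSup_le fun k => by have := le_ciSup hb' k; linarith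

lemma setIntegral_Ioi_comp_add (h : ℝ → ℝ) (a d : ℝ) :
    ∫ u in Ioi a, h (u + d) = ∫ x in Ioi (a + d), h x := by
  rw [← integral_indicator measurableSet_Ioi, ← integral_indicator measurableSet_Ioi]
  have heq : (Ioi a).indicator (fun u => h (u + d)) =
      fun u => (Ioi (a + d)).indicator h (u + d) := by
    funext u
    by_cases hu : u ∈ Ioi a
    · rw [indicator_of_mem hu, indicator_of_mem (by simpa using add_lt_add_right hu.out d)]
    · rw [indicator_of_notMem hu, indicator_of_notMem (by
        simp only [mem_Ioi] at hu ⊢; intro hc; exact hu (by linarith))]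
  rw [heq, integral_add_right_eq_self]

lemma density_of_cdf (ν : Measure ℝ) [IsProbabilityMeasure ν] (G g : ℝ → ℝ)
    (hcdf : ∀ x, (ν (Iic x)).toReal = G x)
    (h0 : G 0 = 0)
    (hd : ∀ x ∈ Ici (0:ℝ), HasDerivAt G (g x) x)
    (hg0 : ∀ x ∈ Ici (0:ℝ), 0 ≤ g x)
    (hlim : Tendsto G atTop (nhds 1)) :
    ν = volume.withDensity ((Ioi (0:ℝ)).indicator fun y => ENNReal.ofReal (g y)) := by
  have hint : IntegrableOn g (Ioi 0) :=
    integrableOn_Ioi_deriv_of_nonneg' hd (fun x hx => hg0 x hx.out.le) hlim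
  have hIoi : ∀ a : ℝ, 0 ≤ a → ∫ y in Ioi a, g y = 1 - G a := by
    intro a ha
    exact integral_Ioi_of_hasDerivAt_of_nonneg'
      (fun x hx => hd x (le_trans ha hx.out))
      (fun x hx => hg0 x (le_trans ha hx.out.le)) hlim
  refine Measure.ext_of_Iic ν _ fun a => ?_
  rw [withDensity_apply _ measurableSet_Iic]
  rw [lintegral_indicator measurableSet_Ioi, Measure.restrict_restrict measurableSet_Ioi,
    Set.Ioi_inter_Iic]
  rcases le_or_gt a 0 with ha | ha
  · have h1 : ν (Iic a) = 0 := by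
      have h2 : ν (Iic 0) = 0 := by
        have := hcdf 0
        rw [h0] at this
        exact (ENNReal.toReal_eq_zero_iff _).1 this |>.resolve_right (measure_ne_top ν _)
      exact le_antisymm (le_trans (measure_mono (Iic_subset_Iic.2 ha)) h2.le) zero_le
    rw [h1, Set.Ioc_eq_empty (by simpa using ha), Measure.restrict_empty, lintegral_zero_measure]
  · have hLHS : ν (Iic a) = ENNReal.ofReal (G a) := by
      rw [← hcdf a, ENNReal.ofReal_toReal (measure_ne_top ν _)]
    have hsub : IntegrableOn g (Ioc 0 a) := hint.mono_set Ioc_subset_Ioi_self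
    have hRHS : ∫⁻ y in Ioc 0 a, ENNReal.ofReal (g y) = ENNReal.ofReal (∫ y in Ioc 0 a, g y) :=
      (ofReal_integral_eq_lintegral_ofReal hsub
        ((ae_restrict_iff' measurableSet_Ioc).2 (ae_of_all _ fun y hy => hg0 y hy.1.le))).symm
    have hval : ∫ y in Ioc 0 a, g y = G a := by
      have hu : Ioc 0 a ∪ Ioi a = Ioi (0:ℝ) := Ioc_union_Ioi_eq_Ioi ha.le
      have hdisj : Disjoint (Ioc (0:ℝ) a) (Ioi a) := Ioc_disjoint_Ioi le_rfl
      have := setIntegral_union hdisj measurableSet_Ioi hsub (hint.mono_set (Ioi_subset_Ioi ha.le))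
      rw [hu] at this
      have h1 := hIoi 0 le_rfl
      have h2 := hIoi a ha.le
      rw [this, h2, h0] at h1
      linarith
    rw [hLHS, hRHS, hval]


/-- `FstarS μ n hn p q` is the probability that a consumer with values `v_1, …, v_n`
drawn i.i.d. from `μ` does *not* buy from provider `n` (index `n-1`), when provider `n`
sets price `q` and all other providers set price `p`:
`F*_p(q) = P[v_n - q < max_{i ≤ n-1} (v_i - p)]`. -/
noncomputable def FstarS (μ : Measure ℝ) (n : ℕ) (hn : 0 < n) (p q : ℝ) : ℝ :=
  ((Measure.pi fun _ : Fin n => μ)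
    {v : Fin n → ℝ | v ⟨n - 1, Nat.sub_lt hn Nat.one_pos⟩ - q <
      ⨆ j : {j : Fin n // j ≠ ⟨n - 1, Nat.sub_lt hn Nat.one_pos⟩}, (v j.1 - p)}).toReal

/-- Proposition 3.2 (first two bullets): with `g_p(q,x) = (n-1)·f(x-q+p)·F(x-q+p)^{n-2}` and
`M = max{0, q-p}`, we have `F*_p(q) = ∫_M^∞ F(x)·g_p(q,x) dx` and
`1 - F*_p(q) = ∫_M^∞ (1-F(x))·g_p(q,x) dx + F(M+p-q)^{n-1}`. -/
theorem star_cdf_formula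
    (n : ℕ) (hn : 2 ≤ n) (p q : ℝ) (hp : 0 ≤ p) (hq : 0 ≤ q)
    (μ : Measure ℝ) [IsProbabilityMeasure μ]
    (F f : ℝ → ℝ)
    (hcdf : ∀ x, (μ (Iic x)).toReal = F x)
    (hsupp : ∀ x ≤ (0:ℝ), F x = 0)
    (hcont : Continuous F)
    (hlim : Tendsto F atTop (nhds 1))
    (hderiv : ∀ x ∈ Ici (0:ℝ), HasDerivAt F (f x) x)
    (hfnonneg : ∀ x ∈ Ici (0:ℝ), 0 ≤ f x) :
    FstarS μ n (by omega) p q =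
      (∫ x in Ioi (max 0 (q - p)),
        F x * (((n:ℝ) - 1) * f (x - q + p) * F (x - q + p) ^ (n - 2))) ∧
    1 - FstarS μ n (by omega) p q =
      (∫ x in Ioi (max 0 (q - p)),
        (1 - F x) * (((n:ℝ) - 1) * f (x - q + p) * F (x - q + p) ^ (n - 2))) +
        F (max 0 (q - p) + p - q) ^ (n - 1) := by
  
  obtain ⟨m, rfl⟩ : ∃ m, n = m + 1 := ⟨n - 1, by omega⟩
  have hm : 1 ≤ m := by omega
  haveI : Nonempty (Fin m) := ⟨⟨0, hm⟩⟩
  set M : ℝ := max 0 (q - p) with hM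
  have hMq : q - p ≤ M := le_max_right _ _
  have hM0 : 0 ≤ M := le_max_left _ _
  -- basic facts about F
  have hF0 : ∀ x, 0 ≤ F x := fun x => (hcdf x) ▸ ENNReal.toReal_nonneg
  have hF1 : ∀ x, F x ≤ 1 := by
    intro x
    rw [← hcdf x]
    have h1 : μ (Iic x) ≤ 1 := prob_le_one
    calc (μ (Iic x)).toReal ≤ (1 : ℝ≥0∞).toReal := ENNReal.toReal_mono (by simp) h1
    _ = 1 := by simp
  have hμIic : ∀ x, μ (Iic x) = ENNReal.ofReal (F x) := fun x => by
    rw [← hcdf x, ENNReal.ofReal_toReal (measure_ne_top μ _)]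
  have hmono : Monotone F := fun a b hab => by
    rw [← hcdf, ← hcdf]
    exact ENNReal.toReal_mono (measure_ne_top μ _) (measure_mono (Iic_subset_Iic.2 hab))
  -- no atoms and Iio
  have hatom : ∀ s : ℝ, μ {s} = 0 := by
    intro s
    have key : ∀ t, t < s → μ {s} ≤ ENNReal.ofReal (F s - F t) := by
      intro t ht
      have hd' : μ (Ioc t s) = μ (Iic s) - μ (Iic t) := by
        rw [← (show Iic s \ Iic t = Ioc t s by ext x; simp [and_comm]),
          measure_diff (Iic_subset_Iic.2 ht.le) nullMeasurableSet_Iic (measure_ne_top μ _)]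
      calc μ {s} ≤ μ (Ioc t s) := measure_mono (by simp [ht])
      _ = ENNReal.ofReal (F s) - ENNReal.ofReal (F t) := by rw [hd', hμIic, hμIic]
      _ = ENNReal.ofReal (F s - F t) := (ENNReal.ofReal_sub _ (hF0 t)).symm
    by_contra hne
    have hpos : 0 < (μ {s}).toReal :=
      ENNReal.toReal_pos hne (measure_ne_top _ _)
    set r := (μ {s}).toReal with hr
    obtain ⟨δ, hδ, hδ'⟩ := Metric.continuousAt_iff.1 hcont.continuousAt (r / 2) (by linarith)
    have ht : s - δ / 2 < s := by linarith
    have hdist : dist (s - δ / 2) s < δ := by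
      rw [Real.dist_eq]; rw [abs_of_nonpos (by linarith)]; linarith
    have hFd := hδ' hdist
    rw [Real.dist_eq] at hFd
    have hFd' : F s - F (s - δ / 2) < r / 2 := by
      cases abs_cases (F (s - δ / 2) - F s) with
      | inl h => linarith [h.1]
      | inr h => linarith [h.1]
    have h1 := key _ ht
    have h2 : (μ {s}).toReal ≤ F s - F (s - δ / 2) := by
      have := ENNReal.toReal_mono ENNReal.ofReal_ne_top h1
      rwa [ENNReal.toReal_ofReal
        (by linarith [hmono (show s - δ/2 ≤ s by linarith)] : (0:ℝ) ≤ F s - F (s - δ/2))] at this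
    linarith
  have hIio : ∀ s : ℝ, μ (Iio s) = ENNReal.ofReal (F s) := by
    intro s
    have h1 : μ (Iio s) ≤ μ (Iic s) := measure_mono Iio_subset_Iic_self
    have h2 : μ (Iic s) ≤ μ (Iio s) := by
      rw [← Set.Iio_union_right]
      exact (measure_union_le _ _).trans (by rw [hatom s, add_zero])
    rw [← hμIic s]; exact le_antisymm h1 h2
  -- the product structure
  set Pm : Measure (Fin m → ℝ) := Measure.pi (fun _ : Fin m => μ) with hPm
  set S : Set (ℝ × (Fin m → ℝ)) := {z | z.1 < (⨆ k, z.2 k) + q - p} with hSdef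
  have hS : MeasurableSet S := by
    have h2 : Measurable fun z : ℝ × (Fin m → ℝ) => (⨆ k, z.2 k) + q - p :=
      ((Measurable.iSup fun k =>
        (measurable_pi_apply k).comp measurable_snd).add_const q).sub_const p
    exact measurableSet_lt measurable_fst h2
  have hsurj : Function.Surjective
      (fun k : Fin m => (⟨Fin.castSucc k, (Fin.castSucc_lt_last k).ne⟩ :
        {j : Fin (m+1) // j ≠ Fin.last m})) := by
    rintro ⟨j, hj⟩
    exact ⟨j.castPred hj, Subtype.ext (Fin.castSucc_castPred j hj)⟩
  have hsup : ∀ v : Fin (m+1) → ℝ,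
      (⨆ j : {j : Fin (m+1) // j ≠ Fin.last m}, (v j.1 - p))
        = (⨆ k, v (Fin.castSucc k)) - p := by
    intro v
    rw [← iSup_comp_surj hsurj (fun j => v j.1 - p)]
    exact ciSup_sub_const (fun k => v (Fin.castSucc k)) p
  have hE : {v : Fin (m+1) → ℝ | v (Fin.last m) - q <
      ⨆ j : {j : Fin (m+1) // j ≠ Fin.last m}, (v j.1 - p)}
      = (MeasurableEquiv.piFinSuccAbove (fun _ : Fin (m+1) => ℝ) (Fin.last m)) ⁻¹' S := by
    ext v
    simp only [mem_setOf_eq, mem_preimage, MeasurableEquiv.piFinSuccAbove_apply, hSdef,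
      Fin.insertNthEquiv_symm_apply, Fin.removeNth, Fin.succAbove_last]
    rw [hsup v]
    constructor <;> intro h <;> linarith
  have hmeas_sup : Measurable fun w : Fin m → ℝ => ⨆ k, w k :=
    Measurable.iSup fun k => measurable_pi_apply k
  set ν : Measure ℝ := Pm.map (fun w => ⨆ k, w k) with hνdef
  haveI : IsProbabilityMeasure Pm := by rw [hPm]; infer_instance
  haveI : IsProbabilityMeasure ν := Measure.isProbabilityMeasure_map hmeas_sup.aemeasurable
  have hφmeas : Measurable fun x : ℝ => ENNReal.ofReal (F (x + q - p)) :=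
    (hcont.measurable.comp ((measurable_id.add_const q).sub_const p)).ennreal_ofReal
  have hprod : (μ.prod Pm) S = ∫⁻ x, ENNReal.ofReal (F (x + q - p)) ∂ν := by
    rw [Measure.prod_apply_symm hS]
    have h1 : ∀ w : Fin m → ℝ, (fun x => (x, w)) ⁻¹' S = Iio ((⨆ k, w k) + q - p) :=
      fun w => rfl
    calc ∫⁻ w, μ ((fun x => (x, w)) ⁻¹' S) ∂Pm
        = ∫⁻ w, ENNReal.ofReal (F ((⨆ k, w k) + q - p)) ∂Pm := by
          refine lintegral_congr fun w => ?_
          rw [h1 w, hIio]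
      _ = ∫⁻ x, ENNReal.ofReal (F (x + q - p)) ∂ν := by
          rw [hνdef, lintegral_map hφmeas hmeas_sup]
  -- the law of the max has density gmax
  have hcdfν : ∀ x, ν (Iic x) = (μ (Iic x)) ^ m := by
    intro x
    rw [hνdef, Measure.map_apply hmeas_sup measurableSet_Iic]
    have hset : (fun w : Fin m → ℝ => ⨆ k, w k) ⁻¹' (Iic x)
        = Set.pi univ (fun _ => Iic x) := by
      ext w
      simp only [mem_preimage, mem_Iic, Set.mem_pi, mem_univ, forall_true_left]
      exact ciSup_le_iff ((Set.finite_range w).bddAbove)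
    rw [hPm, hset, Measure.pi_pi]
    simp
  have hcdfν' : ∀ x, (ν (Iic x)).toReal = F x ^ m := by
    intro x; rw [hcdfν, ENNReal.toReal_pow, hcdf]
  have hF00 : F 0 = 0 := hsupp 0 le_rfl
  have hdmax : ∀ x ∈ Ici (0:ℝ), HasDerivAt (fun y => F y ^ m)
      ((m:ℝ) * F x ^ (m-1) * f x) x := fun x hx => (hderiv x hx).pow m
  have hgmax0 : ∀ x ∈ Ici (0:ℝ), 0 ≤ (m:ℝ) * F x ^ (m-1) * f x := fun x hx =>
    mul_nonneg (mul_nonneg (by positivity) (pow_nonneg (hF0 x) _)) (hfnonneg x hx)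
  have hlimm : Tendsto (fun y => F y ^ m) atTop (nhds 1) := by simpa using hlim.pow m
  have hνdens := density_of_cdf ν (fun x => F x ^ m) (fun x => (m:ℝ) * F x ^ (m-1) * f x)
    hcdfν' (by show F 0 ^ m = 0; rw [hF00]; exact zero_pow (by omega)) hdmax hgmax0 hlimm
  have hρmeas : Measurable ((Ioi (0:ℝ)).indicator
      fun y => ENNReal.ofReal ((m:ℝ) * F y ^ (m-1) * f y)) := by
    have heq : ((Ioi (0:ℝ)).indicator fun y => ENNReal.ofReal ((m:ℝ) * F y ^ (m-1) * f y)) =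
        (Ioi (0:ℝ)).indicator fun y => ENNReal.ofReal ((m:ℝ) * F y ^ (m-1) * deriv F y) := by
      apply Set.indicator_congr
      intro y hy
      show ENNReal.ofReal ((m:ℝ) * F y ^ (m-1) * f y)
        = ENNReal.ofReal ((m:ℝ) * F y ^ (m-1) * deriv F y)
      rw [(hderiv y (mem_Ici.2 (le_of_lt hy))).deriv]
    rw [heq]
    exact (((measurable_const.mul ((hcont.measurable).pow_const _)).mul
      (measurable_deriv F)).ennreal_ofReal).indicator measurableSet_Ioi
  have hgint : IntegrableOn (fun x => (m:ℝ) * F x ^ (m-1) * f x) (Ioi 0) :=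
    integrableOn_Ioi_deriv_of_nonneg' hdmax (fun x hx => hgmax0 x hx.out.le) hlimm
  have hIint : IntegrableOn (fun x => F (x + q - p) * ((m:ℝ) * F x ^ (m-1) * f x)) (Ioi 0) := by
    apply Integrable.bdd_mul (c := 1) hgint
      ((hcont.comp ((continuous_id.add continuous_const).sub continuous_const)).aestronglyMeasurable)
    exact ae_of_all _ fun x => by
      simp only [Function.comp_apply, Real.norm_eq_abs]
      rw [abs_of_nonneg (hF0 _)]; exact hF1 _
  -- main chain for F*
  have hchain : ∀ hpos : 0 < m + 1, FstarS μ (m+1) hpos p q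
      = ∫ x in Ioi 0, F (x + q - p) * ((m:ℝ) * F x ^ (m-1) * f x) := by
    intro hpos
    have h0 : FstarS μ (m+1) hpos p q = ((Measure.pi fun _ : Fin (m+1) => μ)
        {v : Fin (m+1) → ℝ | v (Fin.last m) - q <
          ⨆ j : {j : Fin (m+1) // j ≠ Fin.last m}, (v j.1 - p)}).toReal := rfl
    rw [h0, hE,
      (measurePreserving_piFinSuccAbove (fun _ : Fin (m+1) => μ)
        (Fin.last m)).measure_preimage hS.nullMeasurableSet,
      hprod, hνdens,
      lintegral_withDensity_eq_lintegral_mul volume hρmeas hφmeas]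
    have hind : ((Ioi (0:ℝ)).indicator (fun y => ENNReal.ofReal ((m:ℝ) * F y ^ (m-1) * f y))
          * fun x => ENNReal.ofReal (F (x + q - p)))
        = (Ioi (0:ℝ)).indicator
            (fun x => ENNReal.ofReal (F (x + q - p) * ((m:ℝ) * F x ^ (m-1) * f x))) := by
      funext x
      by_cases hx : x ∈ Ioi (0:ℝ)
      · simp only [Pi.mul_apply, indicator_of_mem hx]
        rw [mul_comm, ← ENNReal.ofReal_mul (hF0 _)]
      · simp [indicator_of_notMem hx]
    rw [hind, lintegral_indicator measurableSet_Ioi,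
      ← ofReal_integral_eq_lintegral_ofReal hIint
        ((ae_restrict_iff' measurableSet_Ioi).2 (ae_of_all _ fun x hx =>
          mul_nonneg (hF0 _) (hgmax0 x hx.out.le))),
      ENNReal.toReal_ofReal (setIntegral_nonneg measurableSet_Ioi fun x hx =>
        mul_nonneg (hF0 _) (hgmax0 x (le_of_lt hx)))]
  -- restrict the integral to Ioi c, c := M - (q - p)
  have hc0 : 0 ≤ M - (q - p) := by linarith [hMq]
  have hvanish : ∀ u ∈ Ioc (0:ℝ) (M - (q - p)),
      F (u + q - p) * ((m:ℝ) * F u ^ (m-1) * f u) = 0 := by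
    rintro u ⟨hu1, hu2⟩
    rcases le_or_gt (q - p) 0 with h | h
    · have hMz : M = 0 := max_eq_left (by linarith)
      rw [hMz] at hu2
      rw [hsupp _ (by linarith), zero_mul]
    · have hcz : M - (q - p) = 0 := by rw [hM, max_eq_right h.le]; ring
      rw [hcz] at hu2
      linarith
  have hIoi0 : ∫ x in Ioi (0:ℝ), F (x + q - p) * ((m:ℝ) * F x ^ (m-1) * f x)
      = ∫ u in Ioi (M - (q - p)), F (u + q - p) * ((m:ℝ) * F u ^ (m-1) * f u) := by
    rw [← Ioc_union_Ioi_eq_Ioi hc0,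
      setIntegral_union (Ioc_disjoint_Ioi le_rfl) measurableSet_Ioi
        (hIint.mono_set Ioc_subset_Ioi_self) (hIint.mono_set (Ioi_subset_Ioi hc0)),
      setIntegral_eq_zero_of_forall_eq_zero hvanish, zero_add]
  have hsubst : ∫ u in Ioi (M - (q - p)), F (u + q - p) * ((m:ℝ) * F u ^ (m-1) * f u)
      = ∫ x in Ioi M, F x * ((m:ℝ) * f (x - q + p) * F (x - q + p) ^ (m-1)) := by
    have h1 : ∀ u : ℝ, F (u + q - p) * ((m:ℝ) * F u ^ (m-1) * f u)
        = (fun x => F x * ((m:ℝ) * f (x - q + p) * F (x - q + p) ^ (m-1))) (u + (q - p)) := by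
      intro u
      simp only
      have e2 : u + (q - p) - q + p = u := by ring
      rw [e2]
      have e1 : u + (q - p) = u + q - p := by ring
      rw [e1]
      ring
    rw [setIntegral_congr_fun measurableSet_Ioi (fun u _ => h1 u),
      setIntegral_Ioi_comp_add (fun x => F x * ((m:ℝ) * f (x - q + p) * F (x - q + p) ^ (m-1)))
        (M - (q - p)) (q - p)]
    have e3 : M - (q - p) + (q - p) = M := by ring
    rw [e3]
  have hFstar : ∀ hpos : 0 < m + 1, FstarS μ (m+1) hpos p q
      = ∫ x in Ioi M, F x * ((m:ℝ) * f (x - q + p) * F (x - q + p) ^ (m-1)) := by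
    intro hpos
    rw [hchain, hIoi0, hsubst]
  have e2 : m + 1 - 2 = m - 1 := by omega
  have e5 : m + 1 - 1 = m := by omega
  constructor
  · rw [hFstar]
    symm
    apply setIntegral_congr_fun measurableSet_Ioi
    intro x _
    rw [e2]; push_cast; ring
  · -- second bullet
    have hGd : ∀ x ∈ Ici M, HasDerivAt (fun y => F (y - q + p) ^ m)
        ((m:ℝ) * f (x - q + p) * F (x - q + p) ^ (m-1)) x := by
      intro x hx
      have h1 : (0:ℝ) ≤ x - q + p := by have := hx.out; simp only [hM] at this ⊢; have := hMq; linarith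
      have hin : HasDerivAt (fun y : ℝ => y - q + p) 1 x := by
        simpa using ((hasDerivAt_id x).sub_const q).add_const p
      have hF' : HasDerivAt (fun y => F (y - q + p)) (f (x - q + p)) x := by
        have := (hderiv _ h1).comp x hin
        rw [mul_one] at this; exact this
      have hpow : HasDerivAt (fun y => F (y - q + p) ^ m)
          ((m:ℝ) * F (x - q + p) ^ (m-1) * f (x - q + p)) x := hF'.pow m
      convert hpow using 1
      ring
    have hGtend : Tendsto (fun y => F (y - q + p) ^ m) atTop (nhds 1) := by
      have h1 : Tendsto (fun y : ℝ => y - q + p) atTop atTop :=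
        (tendsto_atTop_add_const_right atTop (p - q) tendsto_id).congr (fun y => by simp only [id_eq]; ring)
      simpa using (hlim.comp h1).pow m
    have hgord0 : ∀ x ∈ Ioi M, 0 ≤ (m:ℝ) * f (x - q + p) * F (x - q + p) ^ (m-1) := by
      intro x hx
      have h1 : (0:ℝ) ≤ x - q + p := by have := hx.out; have := hMq; have := hM0; linarith
      exact mul_nonneg (mul_nonneg (by positivity) (hfnonneg _ h1)) (pow_nonneg (hF0 _) _)
    have hIord : IntegrableOn (fun x => (m:ℝ) * f (x - q + p) * F (x - q + p) ^ (m-1)) (Ioi M) :=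
      integrableOn_Ioi_deriv_of_nonneg' hGd hgord0 hGtend
    have hval2 : ∫ x in Ioi M, (m:ℝ) * f (x - q + p) * F (x - q + p) ^ (m-1)
        = 1 - F (M - q + p) ^ m :=
      integral_Ioi_of_hasDerivAt_of_nonneg' hGd hgord0 hGtend
    have hIF : IntegrableOn
        (fun x => F x * ((m:ℝ) * f (x - q + p) * F (x - q + p) ^ (m-1))) (Ioi M) := by
      apply Integrable.bdd_mul (c := 1) hIord hcont.aestronglyMeasurable
      exact ae_of_all _ fun x => by rw [Real.norm_eq_abs, abs_of_nonneg (hF0 _)]; exact hF1 _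
    have e6 : M + p - q = M - q + p := by ring
    rw [hFstar, e5, e6]
    rw [show (fun x => (1 - F x) * ((((m+1:ℕ):ℝ) - 1) * f (x - q + p)
        * F (x - q + p) ^ (m + 1 - 2))) = fun x => ((m:ℝ) * f (x - q + p)
        * F (x - q + p) ^ (m-1) - F x * ((m:ℝ) * f (x - q + p) * F (x - q + p) ^ (m-1)))
      from funext fun x => by rw [e2]; push_cast; ring]
    rw [integral_sub hIord hIF, hval2]
    ring
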